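/- For all real numbers r₁, r₂, r₃, the determinant Δ₃ of the symmetric 3×3 matrix H(r) with diagonal entries H₁₁ = H₂₂ = H₃₃ = 2r₁²+2r₂²+2r₃² and off-diagonal entries H₁₂ = r₃²−r₁²−r₂²−2r₁r₂, H₁₃ = r₂²−r₁²−r₃²−2r₁r₃, H₂₃ = r₁²−r₂²−r₃²−2r₂r₃ is nonnegative: Δ₃ ≥ 0. -/

import Mathlib

theorem stmt_7 (r₁ r₂ r₃ : ℝ) :
    (!![2 * r₁ ^ 2 + 2 * r₂ ^ 2 + 2 * r₃ ^ 2,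
        r₃ ^ 2 - r₁ ^ 2 - r₂ ^ 2 - 2 * r₁ * r₂,
        r₂ ^ 2 - r₁ ^ 2 - r₃ ^ 2 - 2 * r₁ * r₃;
        r₃ ^ 2 - r₁ ^ 2 - r₂ ^ 2 - 2 * r₁ * r₂,
        2 * r₁ ^ 2 + 2 * r₂ ^ 2 + 2 * r₃ ^ 2,
        r₁ ^ 2 - r₂ ^ 2 - r₃ ^ 2 - 2 * r₂ * r₃;
        r₂ ^ 2 - r₁ ^ 2 - r₃ ^ 2 - 2 * r₁ * r₃,
        r₁ ^ 2 - r₂ ^ 2 - r₃ ^ 2 - 2 * r₂ * r₃,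
        2 * r₁ ^ 2 + 2 * r₂ ^ 2 + 2 * r₃ ^ 2] : Matrix (Fin 3) (Fin 3) ℝ).det ≥ 0 := by
  rw [Matrix.det_fin_three]
  norm_num [Matrix.cons_val_zero, Matrix.cons_val_one, Matrix.head_cons, Matrix.cons_val_two, Matrix.tail_cons]
  nlinarith [sq_nonneg (-r₃^3 + 6*r₂*r₃^2 - 5*r₂^2*r₃ + 3*r₁*r₃^2 - 3*r₁*r₂^2 - 3*r₁^2*r₃ + 2*r₁^2*r₂ + r₁^3),
    sq_nonneg (r₃^3 - r₂^2*r₃ - 3*r₁*r₃^2 - 3*r₁*r₂^2 + 3*r₁^2*r₃ + 4*r₁^2*r₂ - r₁^3),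
    sq_nonneg (-r₃^3 - r₂^2*r₃ + 2*r₂^3 + r₁*r₃^2 - r₁*r₂^2 + r₁^2*r₃ - r₁^3),
    sq_nonneg (r₃^3 - r₂^2*r₃ + r₁*r₃^2 + r₁*r₂^2 - r₁^2*r₃ - r₁^3)]
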